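/- Let λ ∈ ℤ^D \ {0} and let (φ, ψ) be a λ-mode wave solution on (0,∞). Then: (i) there is C > 0 depending only on D and p_1,…,p_D such that for every t ∈ (0, t_{λ*}], |t·(d/dt)E_{λ,low}(t)| ≤ C·τ_λ(t)²·(1 + log(t_{λ*}/t)²)·E_{λ,low}(t); (ii) there is C_low > 0 depending only on D and p_1,…,p_D such that for every t ∈ (0, t_{λ*}]: C_low^{−1}·E_{λ,low}(t) ≤ E_{λ,low}(t_{λ*}) ≤ C_low·E_{λ,low}(t). -/

import Mathlib

open Real Filter MeasureTheory Topology

/-- τ_λ(t) = (∑ᵢ t^(2-2pᵢ) λᵢ²)^(1/2). -/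
noncomputable def tau {D : ℕ} (p : Fin D → ℝ) (lam : Fin D → ℤ) (t : ℝ) : ℝ :=
  Real.sqrt (∑ i, t ^ (2 - 2 * p i) * ((lam i : ℝ)) ^ 2)

/-- A λ-mode wave solution on the set `I`: t φ' = ψ and t ψ' = -τ_λ(t)² φ. -/
def IsWaveSol {D : ℕ} (p : Fin D → ℝ) (lam : Fin D → ℤ) (φ ψ : ℝ → ℝ) (I : Set ℝ) : Prop :=
  ∀ t ∈ I, HasDerivAt φ (ψ t / t) t ∧ HasDerivAt ψ (-(tau p lam t ^ 2) * φ t / t) t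

/-- The low-frequency wave energy E_{λ,low}(t) = ψ(t)² + φ̃(t)², where
φ̃(t) = φ(t) - ψ(t) log(t/t_{λ*}). -/
noncomputable def Elow (φ ψ : ℝ → ℝ) (tstar t : ℝ) : ℝ :=
  ψ t ^ 2 + (φ t - ψ t * Real.log (t / tstar)) ^ 2

private lemma mono_of_hasDerivAt {f f' : ℝ → ℝ} {a b : ℝ} (hab : a ≤ b)
    (hf : ∀ x ∈ Set.Icc a b, HasDerivAt f (f' x) x)
    (h0 : ∀ x ∈ Set.Ioo a b, 0 ≤ f' x) : f a ≤ f b := by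
  have hc : ContinuousOn f (Set.Icc a b) := fun x hx =>
    (hf x hx).continuousAt.continuousWithinAt
  have hm := monotoneOn_of_deriv_nonneg (convex_Icc a b) hc
    (fun x hx => by
      rw [interior_Icc] at hx
      exact ((hf x (Set.Ioo_subset_Icc_self hx)).differentiableAt).differentiableWithinAt)
    (fun x hx => by
      rw [interior_Icc] at hx
      rw [(hf x (Set.Ioo_subset_Icc_self hx)).deriv]
      exact h0 x hx)
  exact hm (Set.left_mem_Icc.2 hab) (Set.right_mem_Icc.2 hab) hab

private lemma log_sq_le {x ε : ℝ} (hx : 1 ≤ x) (hε : 0 < ε) :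
    1 + Real.log x ^ 2 ≤ (1 + 4 / ε ^ 2) * x ^ ε := by
  have hx0 : 0 < x := lt_of_lt_of_le one_pos hx
  have h1 : (1:ℝ) ≤ x ^ ε := Real.one_le_rpow hx hε.le
  have hε2 : 0 < ε / 2 := by linarith
  have hl0 : 0 ≤ Real.log x := Real.log_nonneg hx
  have hrp : 0 < x ^ (ε/2) := Real.rpow_pos_of_pos hx0 _
  have hl : ε / 2 * Real.log x ≤ x ^ (ε/2) := by
    have := Real.log_le_sub_one_of_pos hrp
    rw [Real.log_rpow hx0] at this
    linarith
  have hsq : (ε/2 * Real.log x) * (ε/2 * Real.log x) ≤ x ^ (ε/2) * x ^ (ε/2) := by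
    apply mul_self_le_mul_self (by positivity) hl
  rw [← Real.rpow_add hx0] at hsq
  have he : ε / 2 + ε / 2 = ε := by ring
  rw [he] at hsq
  have hε2' : (0:ℝ) < ε ^ 2 := by positivity
  have h2 : Real.log x ^ 2 ≤ 4 / ε ^ 2 * x ^ ε := by
    rw [div_mul_eq_mul_div, le_div_iff₀ hε2']
    nlinarith [hsq]
  nlinarith [h1, h2]

private lemma elow_hasDerivAt {D : ℕ} (p : Fin D → ℝ) (lam : Fin D → ℤ) {tstar : ℝ}
    (hts : 0 < tstar) {φ ψ : ℝ → ℝ} (hsol : IsWaveSol p lam φ ψ (Set.Ioi 0))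
    {s : ℝ} (hs : 0 < s) :
    HasDerivAt (Elow φ ψ tstar)
      (2 * tau p lam s ^ 2 / s *
        (φ s * (Real.log (s / tstar) * (φ s - ψ s * Real.log (s / tstar)) - ψ s))) s := by
  obtain ⟨hφ, hψ⟩ := hsol s hs
  have hlog : HasDerivAt (fun u : ℝ => Real.log (u / tstar)) (1 / s) s := by
    have h := ((hasDerivAt_id s).div_const tstar).log
      (by positivity)
    convert h using 1
    · rfl
    · simp only [id]
      field_simp
  have h1 : HasDerivAt (fun u => ψ u ^ 2)
      (2 * ψ s * (-(tau p lam s ^ 2) * φ s / s)) s := by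
    simpa using hψ.fun_pow 2
  have h2 : HasDerivAt (fun u => (φ u - ψ u * Real.log (u / tstar)) ^ 2)
      (2 * (φ s - ψ s * Real.log (s / tstar)) *
        (ψ s / s - ((-(tau p lam s ^ 2) * φ s / s) * Real.log (s / tstar) + ψ s * (1 / s)))) s := by
    simpa using (hφ.fun_sub (hψ.fun_mul hlog)).fun_pow 2
  have h := h1.fun_add h2
  have heq : Elow φ ψ tstar = fun u => ψ u ^ 2 + (φ u - ψ u * Real.log (u / tstar)) ^ 2 := rfl
  rw [heq]
  refine h.congr_deriv ?_
  ring

private lemma elow_deriv_bound {τ2 s L E ps fs : ℝ} (hτ : 0 ≤ τ2) (hs : 0 < s)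
    (hE : E = ps ^ 2 + (fs - ps * L) ^ 2) :
    |s * (2 * τ2 / s * (fs * (L * (fs - ps * L) - ps)))| ≤ 2 * (τ2 * (1 + L ^ 2)) * E := by
  have hkey : s * (2 * τ2 / s * (fs * (L * (fs - ps * L) - ps)))
      = 2 * τ2 * (fs * (L * (fs - ps * L) - ps)) := by
    field_simp
  rw [hkey, hE]
  rw [abs_le]
  have h2 := mul_nonneg (mul_nonneg hτ (sq_nonneg L)) (sq_nonneg ps)
  have h3 := mul_nonneg (mul_nonneg hτ (sq_nonneg L)) (sq_nonneg (fs - ps * L))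
  have h4 := mul_nonneg hτ (sq_nonneg ps)
  have h5 := mul_nonneg hτ (sq_nonneg (fs - ps * L))
  constructor
  · nlinarith [mul_nonneg hτ (sq_nonneg (fs + (L * (fs - ps * L) - ps))), h2, h3, h4, h5]
  · nlinarith [mul_nonneg hτ (sq_nonneg (fs - (L * (fs - ps * L) - ps))), h2, h3, h4, h5]

private lemma tau_sq {D : ℕ} (p : Fin D → ℝ) (lam : Fin D → ℤ) {s : ℝ} (hs : 0 ≤ s) :
    tau p lam s ^ 2 = ∑ i, s ^ (2 - 2 * p i) * ((lam i : ℝ)) ^ 2 :=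
  Real.sq_sqrt (Finset.sum_nonneg fun _ _ =>
    mul_nonneg (Real.rpow_nonneg hs _) (sq_nonneg _))

private lemma log_ratio_sq {t tstar : ℝ} (ht : 0 < t) (hts : 0 < tstar) :
    Real.log (tstar / t) ^ 2 = Real.log (t / tstar) ^ 2 := by
  rw [← inv_div t tstar, Real.log_inv, neg_sq]

/-- Proposition `prop:wave_low_freq`: the low-frequency energy estimate for the wave equation. -/
theorem wave_low_freq_energy_estimate (D : ℕ) (hD : 2 ≤ D) (p : Fin D → ℝ)
    (hp : ∀ i, p i < 1) :
    (∃ C : ℝ, 0 < C ∧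
      ∀ (lam : Fin D → ℤ), lam ≠ 0 →
      ∀ tstar : ℝ, 0 < tstar → tstar ≤ 1 → tau p lam tstar = 1 →
      ∀ φ ψ : ℝ → ℝ, IsWaveSol p lam φ ψ (Set.Ioi 0) →
      ∀ t : ℝ, t ∈ Set.Ioc (0:ℝ) tstar →
        ∃ E' : ℝ, HasDerivAt (Elow φ ψ tstar) E' t ∧
          |t * E'| ≤ C * (tau p lam t ^ 2 * (1 + Real.log (tstar / t) ^ 2))
              * Elow φ ψ tstar t) ∧
    (∃ Clow : ℝ, 0 < Clow ∧
      ∀ (lam : Fin D → ℤ), lam ≠ 0 →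
      ∀ tstar : ℝ, 0 < tstar → tstar ≤ 1 → tau p lam tstar = 1 →
      ∀ φ ψ : ℝ → ℝ, IsWaveSol p lam φ ψ (Set.Ioi 0) →
      ∀ t : ℝ, t ∈ Set.Ioc (0:ℝ) tstar →
        Clow⁻¹ * Elow φ ψ tstar t ≤ Elow φ ψ tstar tstar ∧
        Elow φ ψ tstar tstar ≤ Clow * Elow φ ψ tstar t) := by
  constructor
  · refine ⟨2, two_pos, fun lam _ tstar hts _ _ φ ψ hsol t ht => ?_⟩
    obtain ⟨ht0, htle⟩ := ht
    refine ⟨_, elow_hasDerivAt p lam hts hsol ht0, ?_⟩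
    rw [log_ratio_sq ht0 hts]
    exact elow_deriv_bound (sq_nonneg _) ht0 rfl
  · have hne : (Finset.univ : Finset (Fin D)).Nonempty := by
      have h0 : 0 < D := by omega
      exact ⟨⟨0, h0⟩, Finset.mem_univ _⟩
    set ε := Finset.univ.inf' hne (fun i => 1 - p i) with hεdef
    have hε : 0 < ε := by
      rw [hεdef, Finset.lt_inf'_iff]
      exact fun i _ => by linarith [hp i]
    have hεle : ∀ i, ε ≤ 1 - p i := fun i => Finset.inf'_le _ (Finset.mem_univ i)
    set Cε : ℝ := 1 + 4 / ε ^ 2 with hCεdef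
    have hCε : 0 < Cε := by positivity
    refine ⟨Real.exp (2 * Cε / ε), Real.exp_pos _,
      fun lam _ tstar hts _ htau1 φ ψ hsol t ht => ?_⟩
    obtain ⟨ht0, htle⟩ := ht
    have hS1 : (∑ i, tstar ^ (2 - 2 * p i) * ((lam i : ℝ)) ^ 2) = 1 := by
      rw [← tau_sq p lam hts.le, htau1]; norm_num
    have haε : ∀ i, ε ≤ 2 - 2 * p i - ε := fun i => by have := hεle i; linarith
    set B : ℝ → ℝ := fun s =>
      ∑ i, (2 * Cε * tstar ^ ε * ((lam i : ℝ)) ^ 2 / (2 - 2 * p i - ε)) * s ^ (2 - 2 * p i - ε)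
      with hBdef
    set Bd : ℝ → ℝ := fun s =>
      ∑ i, (2 * Cε * tstar ^ ε * ((lam i : ℝ)) ^ 2) * s ^ (2 - 2 * p i - ε - 1) with hBddef
    set Ed : ℝ → ℝ := fun s => 2 * tau p lam s ^ 2 / s *
      (φ s * (Real.log (s / tstar) * (φ s - ψ s * Real.log (s / tstar)) - ψ s)) with hEddef
    have hBderiv : ∀ s : ℝ, 0 < s → HasDerivAt B (Bd s) s := by
      intro s hs
      rw [hBdef, hBddef]
      have h : HasDerivAt
          (fun u : ℝ => ∑ i, (2 * Cε * tstar ^ ε * ((lam i : ℝ)) ^ 2 / (2 - 2 * p i - ε)) *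
            u ^ (2 - 2 * p i - ε))
          (∑ i, (2 * Cε * tstar ^ ε * ((lam i : ℝ)) ^ 2 / (2 - 2 * p i - ε)) *
            ((2 - 2 * p i - ε) * s ^ (2 - 2 * p i - ε - 1))) s := by
        apply HasDerivAt.fun_sum
        intro i _
        exact (Real.hasDerivAt_rpow_const (Or.inl hs.ne')).const_mul _
      convert h using 1
      apply Finset.sum_congr rfl
      intro i _
      have hne0 : (2 - 2 * p i - ε) ≠ 0 := (lt_of_lt_of_le hε (haε i)).ne'
      rw [← mul_assoc, div_mul_cancel₀ _ hne0]
    have hkey : ∀ s : ℝ, 0 < s → s ≤ tstar →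
        2 * (tau p lam s ^ 2 * (1 + Real.log (tstar / s) ^ 2)) ≤ s * Bd s := by
      intro s hs hsle
      have hx : 1 ≤ tstar / s := (one_le_div hs).2 hsle
      have hlog := log_sq_le hx hε
      rw [tau_sq p lam hs.le, hBddef]
      simp only
      rw [← hCεdef] at hlog
      rw [Finset.sum_mul, Finset.mul_sum, Finset.mul_sum]
      apply Finset.sum_le_sum
      intro i _
      calc 2 * (s ^ (2 - 2 * p i) * ((lam i : ℝ)) ^ 2 * (1 + Real.log (tstar / s) ^ 2))
          ≤ 2 * (s ^ (2 - 2 * p i) * ((lam i : ℝ)) ^ 2 * (Cε * (tstar / s) ^ ε)) := by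
            apply mul_le_mul_of_nonneg_left _ (by norm_num)
            apply mul_le_mul_of_nonneg_left hlog
            exact mul_nonneg (Real.rpow_nonneg hs.le _) (sq_nonneg _)
        _ = s * (2 * Cε * tstar ^ ε * ((lam i : ℝ)) ^ 2 * s ^ (2 - 2 * p i - ε - 1)) := by
            rw [Real.div_rpow hts.le hs.le]
            rw [show (2 - 2 * p i : ℝ) = (2 - 2 * p i - ε - 1) + 1 + ε by ring]
            rw [Real.rpow_add hs, Real.rpow_add hs, Real.rpow_one]
            have hsε : s ^ ε ≠ 0 := (Real.rpow_pos_of_pos hs ε).ne'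
            field_simp
            ring
    have hEnn : ∀ s : ℝ, 0 ≤ Elow φ ψ tstar s := fun s =>
      add_nonneg (sq_nonneg _) (sq_nonneg _)
    have hEdbound : ∀ s : ℝ, 0 < s → s ≤ tstar → |Ed s| ≤ Bd s * Elow φ ψ tstar s := by
      intro s hs hsle
      have h1 : |s * Ed s| ≤ 2 * (tau p lam s ^ 2 * (1 + Real.log (tstar / s) ^ 2)) *
          Elow φ ψ tstar s := by
        rw [hEddef, log_ratio_sq hs hts]
        exact elow_deriv_bound (sq_nonneg _) hs rfl
      have h2 : 2 * (tau p lam s ^ 2 * (1 + Real.log (tstar / s) ^ 2)) * Elow φ ψ tstar s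
          ≤ s * Bd s * Elow φ ψ tstar s :=
        mul_le_mul_of_nonneg_right (hkey s hs hsle) (hEnn s)
      have h3 : s * |Ed s| ≤ s * (Bd s * Elow φ ψ tstar s) := by
        calc s * |Ed s| = |s * Ed s| := by
              rw [abs_mul s (Ed s), abs_of_pos hs]
          _ ≤ s * Bd s * Elow φ ψ tstar s := le_trans h1 h2
          _ = s * (Bd s * Elow φ ψ tstar s) := by ring
      exact le_of_mul_le_mul_left h3 hs
    have hmem : ∀ s ∈ Set.Icc t tstar, 0 < s := fun s hs => lt_of_lt_of_le ht0 hs.1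
    have hH1 : Elow φ ψ tstar t * Real.exp (B t) ≤
        Elow φ ψ tstar tstar * Real.exp (B tstar) := by
      apply mono_of_hasDerivAt (f := fun s => Elow φ ψ tstar s * Real.exp (B s))
        (f' := fun s => Ed s * Real.exp (B s) + Elow φ ψ tstar s * (Real.exp (B s) * Bd s)) htle
      · intro x hx
        exact (elow_hasDerivAt p lam hts hsol (hmem x hx)).mul ((hBderiv x (hmem x hx)).exp)
      · intro x hx
        have hx0 : 0 < x := lt_trans ht0 hx.1
        have hb := (abs_le.mp (hEdbound x hx0 hx.2.le)).1
        have hexp := (Real.exp_pos (B x)).le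
        nlinarith [mul_le_mul_of_nonneg_right hb hexp]
    have hH2 : -(Elow φ ψ tstar t * Real.exp (-B t)) ≤
        -(Elow φ ψ tstar tstar * Real.exp (-B tstar)) := by
      apply mono_of_hasDerivAt (f := fun s => -(Elow φ ψ tstar s * Real.exp (-B s)))
        (f' := fun s => -(Ed s * Real.exp (-B s) +
          Elow φ ψ tstar s * (Real.exp (-B s) * -Bd s))) htle
      · intro x hx
        exact ((elow_hasDerivAt p lam hts hsol (hmem x hx)).mul
          (((hBderiv x (hmem x hx)).neg).exp)).neg
      · intro x hx
        have hx0 : 0 < x := lt_trans ht0 hx.1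
        have hb := (abs_le.mp (hEdbound x hx0 hx.2.le)).2
        have hexp := (Real.exp_pos (-B x)).le
        nlinarith [mul_le_mul_of_nonneg_right hb hexp]
    have hBnn : ∀ s : ℝ, 0 ≤ s → 0 ≤ B s := by
      intro s hs
      rw [hBdef]
      apply Finset.sum_nonneg
      intro i _
      apply mul_nonneg _ (Real.rpow_nonneg hs _)
      apply div_nonneg _ (le_of_lt (lt_of_lt_of_le hε (haε i)))
      positivity
    have hBts : B tstar ≤ 2 * Cε / ε := by
      rw [hBdef]
      simp only
      have hstep : ∀ i ∈ Finset.univ,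
          2 * Cε * tstar ^ ε * ((lam i : ℝ)) ^ 2 / (2 - 2 * p i - ε) *
            tstar ^ (2 - 2 * p i - ε)
          ≤ 2 * Cε / ε * (tstar ^ (2 - 2 * p i) * ((lam i : ℝ)) ^ 2) := by
        intro i _
        have hpos : 0 < 2 - 2 * p i - ε := lt_of_lt_of_le hε (haε i)
        have he : tstar ^ ε * tstar ^ (2 - 2 * p i - ε) = tstar ^ (2 - 2 * p i) := by
          rw [← Real.rpow_add hts]; ring_nf
        have hdiv : 2 * Cε * (tstar ^ (2 - 2 * p i) * ((lam i : ℝ)) ^ 2) / (2 - 2 * p i - ε)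
            ≤ 2 * Cε * (tstar ^ (2 - 2 * p i) * ((lam i : ℝ)) ^ 2) / ε := by
          apply div_le_div_of_nonneg_left _ hε (haε i)
          have := Real.rpow_nonneg hts.le (2 - 2 * p i)
          positivity
        calc 2 * Cε * tstar ^ ε * ((lam i : ℝ)) ^ 2 / (2 - 2 * p i - ε) *
              tstar ^ (2 - 2 * p i - ε)
            = 2 * Cε * (tstar ^ (2 - 2 * p i) * ((lam i : ℝ)) ^ 2) / (2 - 2 * p i - ε) := by
              rw [← he]; field_simp
          _ ≤ 2 * Cε * (tstar ^ (2 - 2 * p i) * ((lam i : ℝ)) ^ 2) / ε := hdiv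
          _ = 2 * Cε / ε * (tstar ^ (2 - 2 * p i) * ((lam i : ℝ)) ^ 2) := by ring
      calc (∑ i, 2 * Cε * tstar ^ ε * ((lam i : ℝ)) ^ 2 / (2 - 2 * p i - ε) *
            tstar ^ (2 - 2 * p i - ε))
          ≤ ∑ i, 2 * Cε / ε * (tstar ^ (2 - 2 * p i) * ((lam i : ℝ)) ^ 2) :=
            Finset.sum_le_sum hstep
        _ = 2 * Cε / ε := by rw [← Finset.mul_sum, hS1, mul_one]
    have hClow : (0:ℝ) < Real.exp (2 * Cε / ε) := Real.exp_pos _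
    have hexpBts : Real.exp (B tstar) ≤ Real.exp (2 * Cε / ε) := Real.exp_le_exp.2 hBts
    have h1le : 1 ≤ Real.exp (B t) := Real.one_le_exp (hBnn t ht0.le)
    have hE1 : Elow φ ψ tstar t ≤ Real.exp (2 * Cε / ε) * Elow φ ψ tstar tstar := by
      calc Elow φ ψ tstar t ≤ Elow φ ψ tstar t * Real.exp (B t) :=
            le_mul_of_one_le_right (hEnn t) h1le
        _ ≤ Elow φ ψ tstar tstar * Real.exp (B tstar) := hH1
        _ ≤ Elow φ ψ tstar tstar * Real.exp (2 * Cε / ε) :=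
            mul_le_mul_of_nonneg_left hexpBts (hEnn tstar)
        _ = Real.exp (2 * Cε / ε) * Elow φ ψ tstar tstar := mul_comm _ _
    have hE2 : Elow φ ψ tstar tstar ≤ Real.exp (2 * Cε / ε) * Elow φ ψ tstar t := by
      have hstep1 : (Real.exp (2 * Cε / ε))⁻¹ * Elow φ ψ tstar tstar ≤
          Elow φ ψ tstar tstar * Real.exp (-B tstar) := by
        rw [← Real.exp_neg]
        rw [mul_comm]
        apply mul_le_mul_of_nonneg_left _ (hEnn tstar)
        exact Real.exp_le_exp.2 (by linarith)
      have hstep2 : Elow φ ψ tstar t * Real.exp (-B t) ≤ Elow φ ψ tstar t := by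
        apply mul_le_of_le_one_right (hEnn t)
        rw [Real.exp_le_one_iff]
        linarith [hBnn t ht0.le]
      have hmid : Elow φ ψ tstar tstar * Real.exp (-B tstar) ≤
          Elow φ ψ tstar t * Real.exp (-B t) := by linarith [hH2]
      have := le_trans hstep1 (le_trans hmid hstep2)
      rw [inv_mul_le_iff₀ hClow] at this
      linarith [this]
    constructor
    · rw [inv_mul_le_iff₀ hClow]
      exact hE1
    · exact hE2
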